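/- arXiv:2111.09020 — 4 statements merged into one kernel-verified Lean document; each statement's English description precedes it below -/
import Mathlib

section
/- Let V ⊆ ℝ² be an open set, let X, Y : V → ℝ be continuous with X continuously nonvanishing on V, and let ε ∈ {−1, 1} be such that εX(p) > 0 for all p ∈ V. Fix x, x₁ ∈ ℝ, set τ = ε(x₁ − x), and suppose y : ℝ → ℝ is a function, differentiable on the closed interval I between 0 and τ, such that y(0) = 0, y(τ) = 0, (x + εs, y(s)) ∈ V for all s ∈ I, and y'(s) = ε Y(x + εs, y(s))/X(x + εs, y(s)) for all s ∈ I. Define T = (x₁ − x) ∫₀¹ 1/X(x + (x₁ − x)t, y(ε(x₁ − x)t)) dt. Then there exists a differentiable curve σ defined on the closed interval between 0 and T, with values in V, such that σ(0) = (x, 0), σ(T) = (x₁, 0), and σ'(t) = (X(σ(t)), Y(σ(t))) for all t in that interval. -/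
/-- one-field content of Theorem B.
If `y` solves `y' = ε Y/X (x + εs, y(s))` on the interval between `0` and `τ = ε(x₁ − x)`
with `y(0) = y(τ) = 0` and the curve `(x + εs, y(s))` stays in `V` where `εX > 0`, then,
setting `T = (x₁ − x) ∫₀¹ 1/X(x + (x₁ − x)t, y(ε(x₁ − x)t)) dt`, there is a differentiable
curve `σ` on the interval between `0` and `T`, with values in `V`, with `σ(0) = (x, 0)`,
`σ(T) = (x₁, 0)`, and `σ'(t) = (X(σ(t)), Y(σ(t)))`. -/
theorem stmt4 (V : Set (ℝ × ℝ)) (hV : IsOpen V)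
    (X Y : ℝ × ℝ → ℝ) (hX : ContinuousOn X V) (hY : ContinuousOn Y V)
    (ε : ℝ) (hε : ε = -1 ∨ ε = 1) (hXpos : ∀ p ∈ V, 0 < ε * X p)
    (x x₁ τ : ℝ) (hτ : τ = ε * (x₁ - x))
    (y : ℝ → ℝ) (hy0 : y 0 = 0) (hyτ : y τ = 0)
    (hyV : ∀ s ∈ Set.uIcc 0 τ, (x + ε * s, y s) ∈ V)
    (hyode : ∀ s ∈ Set.uIcc 0 τ,
      HasDerivAt y (ε * Y (x + ε * s, y s) / X (x + ε * s, y s)) s)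
    (T : ℝ)
    (hT : T = (x₁ - x) * ∫ t in (0:ℝ)..1,
      1 / X (x + (x₁ - x) * t, y (ε * (x₁ - x) * t))) :
    ∃ σ : ℝ → ℝ × ℝ, σ 0 = (x, 0) ∧ σ T = (x₁, 0) ∧
      ∀ t ∈ Set.uIcc 0 T, σ t ∈ V ∧ HasDerivAt σ (X (σ t), Y (σ t)) t := by
  have hε2 : ε * ε = 1 := by rcases hε with h | h <;> simp [h]
  have hεne : ε ≠ 0 := by rcases hε with h | h <;> simp [h]
  have hε1 : x₁ - x = ε * τ := by rw [hτ, ← mul_assoc, hε2, one_mul]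
  -- the clamp onto uIcc 0 τ
  set c : ℝ → ℝ := fun u => max (min 0 τ) (min u (max 0 τ)) with hc_def
  have hc_mem : ∀ u, c u ∈ Set.uIcc 0 τ := by
    intro u
    rw [Set.uIcc, Set.mem_Icc]
    constructor
    · exact le_max_left _ _
    · exact max_le (inf_le_sup) (min_le_right _ _)
  have hc_id : ∀ u ∈ Set.uIcc 0 τ, c u = u := by
    intro u hu
    rw [Set.uIcc, Set.mem_Icc] at hu
    simp only [hc_def]
    rw [min_eq_left hu.2, max_eq_right hu.1]
  have hc_cont : Continuous c :=
    continuous_const.max (continuous_id.min continuous_const)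
  have hc_mono : Monotone c := by
    intro a b hab
    exact max_le_max le_rfl (min_le_min hab le_rfl)
  -- continuity of y on uIcc
  have hycont : ContinuousOn y (Set.uIcc 0 τ) := fun s hs =>
    ((hyode s hs).continuousAt).continuousWithinAt
  -- curve w
  set w : ℝ → ℝ × ℝ := fun u => (x + ε * c u, y (c u)) with hw_def
  have hw_memV : ∀ u, w u ∈ V := fun u => hyV _ (hc_mem u)
  have hw_cont : Continuous w := by
    apply Continuous.prodMk
    · exact continuous_const.add (continuous_const.mul hc_cont)
    · exact hycont.comp_continuous hc_cont hc_mem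
  have hXw_cont : Continuous fun u => X (w u) :=
    hX.comp_continuous hw_cont hw_memV
  set g : ℝ → ℝ := fun u => (ε * X (w u))⁻¹ with hg_def
  have hg_pos : ∀ u, 0 < g u := fun u => inv_pos.2 (hXpos _ (hw_memV u))
  have hg_cont : Continuous g :=
    (continuous_const.mul hXw_cont).inv₀ fun u => (hXpos _ (hw_memV u)).ne'
  have hg_int : ∀ a b : ℝ, IntervalIntegrable g MeasureTheory.volume a b :=
    fun a b => hg_cont.intervalIntegrable a b
  -- g factors through the clamp
  have hgc : ∀ u, g (c u) = g u := by
    intro u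
    have : c (c u) = c u := hc_id _ (hc_mem u)
    simp only [hg_def, hw_def, this]
  -- lower bound for g
  obtain ⟨z, hz, hzmin'⟩ :=
    isCompact_uIcc.exists_isMinOn (s := Set.uIcc 0 τ) Set.nonempty_uIcc
      hg_cont.continuousOn
  have hzmin : ∀ u ∈ Set.uIcc 0 τ, g z ≤ g u := fun u hu => hzmin' hu
  set m : ℝ := g z with hm_def
  have hm_pos : 0 < m := hg_pos z
  have hm_le : ∀ u, m ≤ g u := fun u => (hzmin _ (hc_mem u)).trans_eq (hgc u)
  -- B
  set B : ℝ → ℝ := fun s => ∫ u in (0:ℝ)..s, g u with hB_def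
  have hB0 : B 0 = 0 := by simp [hB_def]
  have hBderiv : ∀ s, HasDerivAt B (g s) s := by
    intro s
    exact intervalIntegral.integral_hasDerivAt_right (hg_int 0 s)
      (hg_cont.stronglyMeasurableAtFilter _ _) hg_cont.continuousAt
  have hBcont : Continuous B := by
    apply continuous_iff_continuousAt.2
    exact fun s => (hBderiv s).continuousAt
  have hBmono : StrictMono B := by
    intro a b hab
    have h1 : B b - B a = ∫ u in a..b, g u := by
      have := intervalIntegral.integral_add_adjacent_intervals (hg_int 0 a) (hg_int a b)
      simp only [hB_def]
      linarith
    have h2 : 0 < ∫ u in a..b, g u :=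
      intervalIntegral.intervalIntegral_pos_of_pos (hg_int a b) hg_pos hab
    linarith
  have hBlow : ∀ s : ℝ, 0 ≤ s → m * s ≤ B s := by
    intro s hs
    have : ∫ u in (0:ℝ)..s, m ≤ ∫ u in (0:ℝ)..s, g u :=
      intervalIntegral.integral_mono_on hs (intervalIntegrable_const) (hg_int 0 s)
        (fun u _ => hm_le u)
    simpa [mul_comm] using this
  have hBhigh : ∀ s : ℝ, s ≤ 0 → B s ≤ m * s := by
    intro s hs
    have : ∫ u in s..(0:ℝ), m ≤ ∫ u in s..(0:ℝ), g u :=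
      intervalIntegral.integral_mono_on hs (intervalIntegrable_const) (hg_int s 0)
        (fun u _ => hm_le u)
    have h2 : B s = -∫ u in s..(0:ℝ), g u := by
      simp only [hB_def]
      rw [intervalIntegral.integral_symm]
    rw [h2]
    have h3 : (∫ u in s..(0:ℝ), m) = m * (0 - s) := by
      rw [intervalIntegral.integral_const, smul_eq_mul, mul_comm]
    nlinarith [this]
  have hBtop : Filter.Tendsto B Filter.atTop Filter.atTop := by
    apply Filter.tendsto_atTop_mono' _ _ (Filter.tendsto_atTop_atTop_of_monotone
      (fun a b hab => mul_le_mul_of_nonneg_left hab hm_pos.le :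
        Monotone (fun s => m * s))
      (fun b => ⟨b / m + 1, by
        show b ≤ m * (b / m + 1)
        rw [mul_add, mul_div_cancel₀ _ hm_pos.ne']
        nlinarith⟩))
    filter_upwards [Filter.eventually_ge_atTop (0:ℝ)] with s hs
    exact hBlow s hs
  have hBbot : Filter.Tendsto B Filter.atBot Filter.atBot := by
    apply Filter.tendsto_atBot_mono' _ _ (Filter.tendsto_atBot_atBot_of_monotone
      (fun a b hab => mul_le_mul_of_nonneg_left hab hm_pos.le :
        Monotone (fun s => m * s))
      (fun b => ⟨b / m - 1, by
        show m * (b / m - 1) ≤ b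
        rw [mul_sub, mul_div_cancel₀ _ hm_pos.ne']
        nlinarith⟩))
    filter_upwards [Filter.eventually_le_atBot (0:ℝ)] with s hs
    exact hBhigh s hs
  have hBsurj : Function.Surjective B := hBcont.surjective hBtop hBbot
  -- inverse A
  set e : ℝ ≃o ℝ := StrictMono.orderIsoOfSurjective B hBmono hBsurj with he_def
  have he_apply : ∀ s, e s = B s := fun s => by
    rw [he_def, StrictMono.coe_orderIsoOfSurjective]
  set A : ℝ → ℝ := fun t => e.symm t with hA_def
  have hA_cont : Continuous A := e.symm.continuous
  have hA_mono : Monotone A := e.symm.monotone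
  have hBA : ∀ t, B (A t) = t := fun t => by
    rw [← he_apply]; exact e.apply_symm_apply t
  have hAB : ∀ s, A (B s) = s := fun s => by
    simp only [hA_def, ← he_apply]; exact e.symm_apply_apply s
  have hA0 : A 0 = 0 := by
    have := hAB 0
    rwa [hB0] at this
  have hAderiv : ∀ t, HasDerivAt A (g (A t))⁻¹ t := by
    intro t
    exact HasDerivAt.of_local_left_inverse hA_cont.continuousAt (hBderiv (A t))
      (hg_pos (A t)).ne' (Filter.Eventually.of_forall hBA)
  -- T = B τ
  have hTB : T = B τ := by
    rcases eq_or_ne τ 0 with h0 | h0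
    · have : x₁ - x = 0 := by rw [hε1, h0, mul_zero]
      rw [hT, this, zero_mul, h0, hB0]
    · have hint : ∀ t ∈ Set.uIcc (0:ℝ) 1,
          (1 / X (x + (x₁ - x) * t, y (ε * (x₁ - x) * t))) = ε * g (τ * t) := by
        intro t ht
        have htτ : τ * t ∈ Set.uIcc 0 τ := by
          rw [Set.uIcc_of_le (zero_le_one)] at ht
          rcases le_or_gt 0 τ with hτ0 | hτ0
          · rw [Set.uIcc_of_le hτ0, Set.mem_Icc]
            constructor
            · exact mul_nonneg hτ0 ht.1
            · nlinarith [ht.1, ht.2]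
          · rw [Set.uIcc_of_ge hτ0.le, Set.mem_Icc]
            constructor
            · nlinarith [ht.1, ht.2]
            · nlinarith [ht.1, ht.2]
        have hcid : c (τ * t) = τ * t := hc_id _ htτ
        have h1 : x + (x₁ - x) * t = x + ε * c (τ * t) := by
          rw [hcid, hε1]; ring
        have h2 : ε * (x₁ - x) * t = c (τ * t) := by
          rw [hcid, hτ]
        rw [h1, h2]
        simp only [hg_def, hw_def]
        rw [mul_inv, ← mul_assoc, mul_inv_cancel₀ hεne, one_mul, one_div]
      rw [hT, intervalIntegral.integral_congr hint,
        intervalIntegral.integral_const_mul]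
      have h3 : (∫ t in (0:ℝ)..1, g (τ * t)) = τ⁻¹ • ∫ u in (τ*0)..(τ*1), g u :=
        intervalIntegral.integral_comp_mul_left g h0
      rw [h3]
      simp only [mul_zero, mul_one, smul_eq_mul]
      have h4 : ε * τ * (ε * (τ⁻¹ * ∫ u in (0:ℝ)..τ, g u)) =
          (ε * ε) * (τ * τ⁻¹) * ∫ u in (0:ℝ)..τ, g u := by ring
      rw [hε1, h4, hε2, mul_inv_cancel₀ h0, one_mul, one_mul, hB_def]
  have hAT : A T = τ := by rw [hTB, hAB]
  -- σ
  refine ⟨fun t => (x + ε * A t, y (A t)), ?_, ?_, ?_⟩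
  · simp [hA0, hy0]
  · have hxτ : x + ε * τ = x₁ := by
      rw [hτ, ← mul_assoc, hε2]; ring
    show (x + ε * A T, y (A T)) = (x₁, 0)
    rw [hAT, hyτ, hxτ]
  · intro t ht
    have hAt_mem : A t ∈ Set.uIcc 0 τ := by
      rw [Set.uIcc, Set.mem_Icc] at ht ⊢
      have h1 := hA_mono ht.1
      have h2 := hA_mono ht.2
      rw [hA_mono.map_min, hA0, hAT] at h1
      rw [hA_mono.map_max, hA0, hAT] at h2
      exact ⟨h1, h2⟩
    set p : ℝ × ℝ := (x + ε * A t, y (A t)) with hp_def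
    have hpV : p ∈ V := hyV _ hAt_mem
    have hcA : c (A t) = A t := hc_id _ hAt_mem
    have hwA : w (A t) = p := by simp only [hw_def, hcA, hp_def]
    have hXne : X p ≠ 0 := by
      intro hcon
      have := hXpos p hpV
      rw [hcon, mul_zero] at this
      exact lt_irrefl _ this
    have hgA : (g (A t))⁻¹ = ε * X p := by
      simp only [hg_def, hwA, inv_inv]
    refine ⟨hpV, ?_⟩
    have hd1 : HasDerivAt (fun t => x + ε * A t) (ε * (g (A t))⁻¹) t :=
      ((hAderiv t).const_mul ε).const_add x
    have hd2 : HasDerivAt (fun t => y (A t))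
        ((ε * Y p / X p) * (g (A t))⁻¹) t := by
      have := (hyode (A t) hAt_mem).comp t (hAderiv t)
      exact this
    have heq1 : ε * (g (A t))⁻¹ = X p := by
      rw [hgA, ← mul_assoc, hε2, one_mul]
    have heq2 : (ε * Y p / X p) * (g (A t))⁻¹ = Y p := by
      rw [hgA]
      have : ε * Y p / X p * (ε * X p) = (ε * ε) * Y p * (X p / X p) := by ring
      rw [this, hε2, div_self hXne, one_mul, mul_one]
    rw [show ((X p : ℝ), Y p) = (ε * (g (A t))⁻¹, (ε * Y p / X p) * (g (A t))⁻¹) by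
      rw [heq1, heq2]]
    exact hd1.prodMk hd2
end

section
/- Let V ⊆ ℝ² be an open neighborhood of the origin, let X⁺, X⁻ : V → ℝ be continuous and nonvanishing on V with X⁺(0,0) X⁻(0,0) < 0, and set δ = sign(X⁺(0,0)). Let φ : ℝ → ℝ satisfy φ(0) = 0 and be differentiable at 0 with φ'(0) = −1, and let y⁺, y⁻ : ℝ × ℝ → ℝ be continuous on a neighborhood of (0, 0) with y⁺(0, 0) = y⁻(0, 0) = 0. For x near 0 define T^±(x) = (φ(x) − x) ∫₀¹ 1/X^±(x + (φ(x) − x)t, y^±(±δ(φ(x) − x)t, x)) dt and T(x) = δ(T⁻(x) − T⁺(x)). Then T(0) = 0 and T is differentiable at 0 with T'(0) = 2δ (X⁻(0,0) − X⁺(0,0)) / (X⁺(0,0) X⁻(0,0)) > 0. -/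
open Filter Topology MeasureTheory

lemma aux_cont (V : Set (ℝ × ℝ)) (hV : IsOpen V) (h0V : ((0:ℝ), (0:ℝ)) ∈ V)
    (X : ℝ × ℝ → ℝ) (hX : ContinuousOn X V) (hX0 : ∀ p ∈ V, X p ≠ 0)
    (φ : ℝ → ℝ) (hφ0 : φ 0 = 0) (hφc : ContinuousAt φ 0)
    (y : ℝ × ℝ → ℝ) (W : Set (ℝ × ℝ)) (hW : W ∈ nhds ((0:ℝ), (0:ℝ)))
    (hyc : ContinuousOn y W) (hy0 : y (0, 0) = 0)
    (c : ℝ) (hc : |c| ≤ 1) :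
    Filter.Tendsto
      (fun x => ∫ t in (0:ℝ)..1, 1 / X (x + (φ x - x) * t, y (c * (φ x - x) * t, x)))
      (nhds 0) (nhds (1 / X (0, 0))) := by
  have hXn := hX0 _ h0V
  have hXc : ContinuousAt X (0, 0) := hX.continuousAt (hV.mem_nhds h0V)
  have hyc0 : ContinuousAt y (0, 0) := hyc.continuousAt hW
  set b := |X (0, 0)| / 2 with hbdef
  have habs : 0 < |X (0, 0)| := abs_pos.mpr hXn
  have hb : 0 < b := by simp only [hbdef]; linarith
  have hS : IsOpen (V ∩ (fun p => |X p|) ⁻¹' Set.Ioi b) :=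
    (hX.abs).isOpen_inter_preimage hV isOpen_Ioi
  have h0S : ((0:ℝ), (0:ℝ)) ∈ V ∩ (fun p => |X p|) ⁻¹' Set.Ioi b := by
    refine ⟨h0V, ?_⟩
    simp only [Set.mem_preimage, Set.mem_Ioi, hbdef]
    linarith
  obtain ⟨r, hr, hrS⟩ := Metric.isOpen_iff.1 hS _ h0S
  have hys : {q : ℝ × ℝ | q ∈ W ∧ |y q| < r} ∈ nhds ((0:ℝ), (0:ℝ)) := by
    have h1 : ∀ᶠ q in nhds ((0:ℝ), (0:ℝ)), |y q| < r := by
      have h0 := hyc0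
      rw [ContinuousAt, hy0] at h0
      have h2 := h0 (Metric.ball_mem_nhds (0:ℝ) hr)
      filter_upwards [h2] with q hq
      simpa [Real.dist_eq] using hq
    filter_upwards [hW, h1] with q h1 h2 using ⟨h1, h2⟩
  obtain ⟨r₂, hr₂, hball₂⟩ := Metric.mem_nhds_iff.1 hys
  have hWsub : Metric.ball ((0:ℝ), (0:ℝ)) r₂ ⊆ W := fun q hq => (hball₂ hq).1
  set ρ := min (r / 2) r₂ with hρdef
  have hρ : 0 < ρ := lt_min (by linarith) hr₂
  have hρr : ρ ≤ r / 2 := min_le_left _ _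
  have hρr₂ : ρ ≤ r₂ := min_le_right _ _
  -- key geometric claim
  have key : ∀ x : ℝ, |x| < ρ → |φ x - x| < ρ → ∀ t : ℝ, |t| ≤ 1 →
      ((c * (φ x - x) * t, x) ∈ Metric.ball ((0:ℝ), (0:ℝ)) r₂ ∧
        (x + (φ x - x) * t, y (c * (φ x - x) * t, x)) ∈ Metric.ball ((0:ℝ), (0:ℝ)) r) := by
    intro x hx hfx t ht
    have h1 : |c * (φ x - x) * t| ≤ |φ x - x| := by
      rw [abs_mul, abs_mul]
      calc |c| * |φ x - x| * |t| ≤ 1 * |φ x - x| * 1 :=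
            mul_le_mul (mul_le_mul_of_nonneg_right hc (abs_nonneg _)) ht (abs_nonneg _)
              (by positivity)
      _ = |φ x - x| := by ring
    have hmem2 : (c * (φ x - x) * t, x) ∈ Metric.ball ((0:ℝ), (0:ℝ)) r₂ := by
      rw [Metric.mem_ball, Prod.dist_eq]
      refine max_lt ?_ ?_ <;> simp only [Real.dist_eq, sub_zero]
      · linarith
      · linarith
    refine ⟨hmem2, ?_⟩
    have hy2 := (hball₂ hmem2).2
    rw [Metric.mem_ball, Prod.dist_eq]
    refine max_lt ?_ ?_ <;> simp only [Real.dist_eq, sub_zero]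
    · have h2 : |x + (φ x - x) * t| ≤ |x| + |φ x - x| * |t| := by
        calc |x + (φ x - x) * t| ≤ |x| + |(φ x - x) * t| := abs_add_le _ _
        _ = |x| + |φ x - x| * |t| := by rw [abs_mul]
      nlinarith [abs_nonneg (φ x - x), abs_nonneg t]
    · exact hy2
  have hφt : Filter.Tendsto (fun x => φ x - x) (nhds 0) (nhds 0) := by
    have h0 : Filter.Tendsto (fun x => φ x - x) (nhds 0) (nhds (φ 0 - 0)) :=
      hφc.sub continuousAt_id
    simpa [hφ0] using h0
  have hev : ∀ᶠ x in nhds (0:ℝ), |x| < ρ ∧ |φ x - x| < ρ := by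
    have e1 : ∀ᶠ x in nhds (0:ℝ), |x| < ρ := by
      filter_upwards [Metric.ball_mem_nhds (0:ℝ) hρ] with x hx
      simpa [Real.dist_eq] using hx
    have e2 : ∀ᶠ x in nhds (0:ℝ), |φ x - x| < ρ := by
      filter_upwards [hφt (Metric.ball_mem_nhds (0:ℝ) hρ)] with x hx
      simpa [Real.dist_eq] using hx
    filter_upwards [e1, e2] with x h1 h2 using ⟨h1, h2⟩
  have htabs : ∀ t : ℝ, t ∈ Set.uIoc (0:ℝ) 1 → |t| ≤ 1 := by
    intro t ht
    rw [Set.uIoc_of_le zero_le_one] at ht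
    rw [abs_le]
    exact ⟨by linarith [ht.1], ht.2⟩
  have hcont : ContinuousAt
      (fun x => ∫ t in (0:ℝ)..1, 1 / X (x + (φ x - x) * t, y (c * (φ x - x) * t, x))) 0 := by
    apply intervalIntegral.continuousAt_of_dominated_interval (bound := fun _ => 1 / b)
    · filter_upwards [hev] with x hx
      apply ContinuousOn.aestronglyMeasurable ?_ measurableSet_uIoc
      intro t ht
      obtain ⟨hm2, hm1⟩ := key x hx.1 hx.2 t (htabs t ht)
      apply ContinuousAt.continuousWithinAt
      have hc2 : ContinuousAt (fun t : ℝ => (c * (φ x - x) * t, x)) t := by fun_prop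
      have hc3 : ContinuousAt (fun t : ℝ => y (c * (φ x - x) * t, x)) t := by
        refine ContinuousAt.comp ?_ hc2
        exact hyc.continuousAt (mem_nhds_iff.2 ⟨_, hWsub, Metric.isOpen_ball, hm2⟩)
      have hc4 : ContinuousAt
          (fun t : ℝ => (x + (φ x - x) * t, y (c * (φ x - x) * t, x))) t := by
        apply ContinuousAt.prodMk (by fun_prop) hc3
      have hVmem := (hrS hm1).1
      have hc5 : ContinuousAt X ((x + (φ x - x) * t, y (c * (φ x - x) * t, x))) :=
        hX.continuousAt (hV.mem_nhds hVmem)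
      have hc6 : ContinuousAt
          (fun t : ℝ => X (x + (φ x - x) * t, y (c * (φ x - x) * t, x))) t :=
        ContinuousAt.comp hc5 hc4
      exact continuousAt_const.div hc6 (hX0 _ hVmem)
    · filter_upwards [hev] with x hx
      refine Filter.Eventually.of_forall fun t ht => ?_
      obtain ⟨hm2, hm1⟩ := key x hx.1 hx.2 t (htabs t ht)
      have hbig := (hrS hm1).2
      simp only [Set.mem_preimage, Set.mem_Ioi] at hbig
      rw [Real.norm_eq_abs, abs_div, abs_one]
      exact one_div_le_one_div_of_le hb hbig.le
    · exact intervalIntegrable_const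
    · refine Filter.Eventually.of_forall fun t ht => ?_
      have h2 : ContinuousAt (fun x : ℝ => (c * (φ x - x) * t, x)) 0 := by
        exact (((continuousAt_const.mul (hφc.sub continuousAt_id)).mul
          continuousAt_const).prodMk continuousAt_id)
      have h2v : ((c * (φ 0 - 0) * t, (0:ℝ))) = ((0:ℝ), (0:ℝ)) := by
        rw [hφ0]; simp only [sub_self, mul_zero, zero_mul]
      have h3 : ContinuousAt (fun x : ℝ => y (c * (φ x - x) * t, x)) 0 := by
        refine ContinuousAt.comp ?_ h2
        rw [h2v]
        exact hyc0
      have h4 : ContinuousAt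
          (fun x : ℝ => (x + (φ x - x) * t, y (c * (φ x - x) * t, x))) 0 := by
        refine ContinuousAt.prodMk ?_ h3
        exact continuousAt_id.add ((hφc.sub continuousAt_id).mul continuousAt_const)
      have h4v : ((0:ℝ) + (φ 0 - 0) * t, y (c * (φ 0 - 0) * t, (0:ℝ))) = ((0:ℝ), (0:ℝ)) := by
        rw [hφ0]
        simp only [sub_self, mul_zero, zero_mul, add_zero, zero_add]
        rw [hy0]
      have h5 : ContinuousAt
          (fun x : ℝ => X (x + (φ x - x) * t, y (c * (φ x - x) * t, x))) 0 := by
        refine ContinuousAt.comp ?_ h4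
        rw [h4v]
        exact hXc
      refine continuousAt_const.div h5 ?_
      rw [h4v]
      exact hXn
  have h4v : ∀ t : ℝ, ((0:ℝ) + (φ 0 - 0) * t, y (c * (φ 0 - 0) * t, (0:ℝ))) = ((0:ℝ), (0:ℝ)) := by
    intro t
    rw [hφ0]
    simp only [sub_self, mul_zero, zero_mul, add_zero, zero_add]
    rw [hy0]
  have hval : (∫ t in (0:ℝ)..1,
      1 / X (0 + (φ 0 - 0) * t, y (c * (φ 0 - 0) * t, (0:ℝ)))) = 1 / X (0, 0) := by
    have : ∀ t : ℝ, 1 / X (0 + (φ 0 - 0) * t, y (c * (φ 0 - 0) * t, (0:ℝ))) = 1 / X (0, 0) := by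
      intro t; rw [h4v t]
    simp only [this]
    simp
  rw [ContinuousAt] at hcont
  rwa [hval] at hcont

/-- Corollary of Theorem B.
With `X⁺, X⁻` continuous and nonvanishing on a neighborhood `V` of the origin,
`X⁺(0,0)X⁻(0,0) < 0`, `δ = sign X⁺(0,0)`, `φ(0) = 0`, `φ'(0) = −1`, and `y^±` continuous
near `(0,0)` with `y^±(0,0) = 0`, the period function
`T(x) = δ(T⁻(x) − T⁺(x))`, where
`T^±(x) = (φ(x) − x) ∫₀¹ 1/X^±(x + (φ(x) − x)t, y^±(±δ(φ(x) − x)t, x)) dt`,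
satisfies `T(0) = 0` and `T'(0) = 2δ(X⁻(0,0) − X⁺(0,0))/(X⁺(0,0)X⁻(0,0)) > 0`. -/
theorem stmt6 (V : Set (ℝ × ℝ)) (hV : IsOpen V) (h0V : ((0:ℝ), (0:ℝ)) ∈ V)
    (Xp Xm : ℝ × ℝ → ℝ) (hXp : ContinuousOn Xp V) (hXm : ContinuousOn Xm V)
    (hXp0 : ∀ p ∈ V, Xp p ≠ 0) (hXm0 : ∀ p ∈ V, Xm p ≠ 0)
    (hsign : Xp (0, 0) * Xm (0, 0) < 0)
    (δ : ℝ) (hδ : δ = Real.sign (Xp (0, 0)))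
    (φ : ℝ → ℝ) (hφ0 : φ 0 = 0) (hφ' : HasDerivAt φ (-1) 0)
    (yp ym : ℝ × ℝ → ℝ)
    (W : Set (ℝ × ℝ)) (hW : W ∈ nhds ((0:ℝ), (0:ℝ)))
    (hypc : ContinuousOn yp W) (hymc : ContinuousOn ym W)
    (hyp0 : yp (0, 0) = 0) (hym0 : ym (0, 0) = 0)
    (Tp Tm T : ℝ → ℝ)
    (hTp : ∀ x, Tp x = (φ x - x) * ∫ t in (0:ℝ)..1,
        1 / Xp (x + (φ x - x) * t, yp (δ * (φ x - x) * t, x)))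
    (hTm : ∀ x, Tm x = (φ x - x) * ∫ t in (0:ℝ)..1,
        1 / Xm (x + (φ x - x) * t, ym (-δ * (φ x - x) * t, x)))
    (hT : ∀ x, T x = δ * (Tm x - Tp x)) :
    T 0 = 0 ∧
      HasDerivAt T (2 * δ * (Xm (0, 0) - Xp (0, 0)) / (Xp (0, 0) * Xm (0, 0))) 0 ∧
      0 < 2 * δ * (Xm (0, 0) - Xp (0, 0)) / (Xp (0, 0) * Xm (0, 0)) := by
  have hXpn : Xp (0, 0) ≠ 0 := hXp0 _ h0V
  have hXmn : Xm (0, 0) ≠ 0 := hXm0 _ h0V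
  have hδ1 : δ = 1 ∨ δ = -1 := by
    rcases lt_or_gt_of_ne hXpn with h | h
    · right; rw [hδ, Real.sign_of_neg h]
    · left; rw [hδ, Real.sign_of_pos h]
  have hδabs : |δ| ≤ 1 := by rcases hδ1 with h | h <;> rw [h] <;> norm_num
  have hδnabs : |(-δ)| ≤ 1 := by rwa [abs_neg]
  have hT0 : T 0 = 0 := by
    rw [hT, hTm, hTp, hφ0]
    ring
  have hpos : 0 < 2 * δ * (Xm (0, 0) - Xp (0, 0)) / (Xp (0, 0) * Xm (0, 0)) := by
    rcases lt_or_gt_of_ne hXpn with h | h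
    · have hm : 0 < Xm (0, 0) := by nlinarith
      have hd : δ = -1 := by rw [hδ, Real.sign_of_neg h]
      rw [hd, div_pos_iff]
      right
      constructor <;> nlinarith
    · have hm : Xm (0, 0) < 0 := by nlinarith
      have hd : δ = 1 := by rw [hδ, Real.sign_of_pos h]
      rw [hd, div_pos_iff]
      right
      constructor <;> nlinarith
  have hIp := aux_cont V hV h0V Xp hXp hXp0 φ hφ0 hφ'.continuousAt yp W hW hypc hyp0 δ hδabs
  have hIm := aux_cont V hV h0V Xm hXm hXm0 φ hφ0 hφ'.continuousAt ym W hW hymc hym0 (-δ) hδnabs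
  set Ip : ℝ → ℝ := fun x => ∫ t in (0:ℝ)..1,
    1 / Xp (x + (φ x - x) * t, yp (δ * (φ x - x) * t, x)) with hIpdef
  set Im : ℝ → ℝ := fun x => ∫ t in (0:ℝ)..1,
    1 / Xm (x + (φ x - x) * t, ym (-δ * (φ x - x) * t, x)) with hImdef
  have hslopeφ : Filter.Tendsto (fun x => (φ x - x) / x) (nhdsWithin 0 {(0:ℝ)}ᶜ) (nhds (-2)) := by
    have h1 := hasDerivAt_iff_tendsto_slope.1 hφ'
    have h2 : Filter.Tendsto (fun x : ℝ => slope φ 0 x - 1) (nhdsWithin 0 {(0:ℝ)}ᶜ)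
        (nhds (-1 - 1)) := h1.sub tendsto_const_nhds
    norm_num at h2
    refine Filter.Tendsto.congr' ?_ h2
    filter_upwards [self_mem_nhdsWithin] with x hx
    have hx0 : x ≠ 0 := hx
    rw [slope_def_field, hφ0]
    field_simp
    ring
  have hmain : Filter.Tendsto (fun x => δ * ((φ x - x) / x) * (Im x - Ip x))
      (nhdsWithin 0 {(0:ℝ)}ᶜ) (nhds (δ * (-2) * (1 / Xm (0, 0) - 1 / Xp (0, 0)))) :=
    (tendsto_const_nhds.mul hslopeφ).mul ((hIm.sub hIp).mono_left nhdsWithin_le_nhds)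
  have hXpn' : Xp (0 : ℝ × ℝ) ≠ 0 := hXpn
  have hXmn' : Xm (0 : ℝ × ℝ) ≠ 0 := hXmn
  have hvaleq : δ * (-2) * (1 / Xm (0, 0) - 1 / Xp (0, 0))
      = 2 * δ * (Xm (0, 0) - Xp (0, 0)) / (Xp (0, 0) * Xm (0, 0)) := by
    field_simp [hXpn', hXmn']
    ring
  rw [hvaleq] at hmain
  refine ⟨hT0, ?_, hpos⟩
  rw [hasDerivAt_iff_tendsto_slope]
  refine Filter.Tendsto.congr' ?_ hmain
  filter_upwards [self_mem_nhdsWithin] with x hx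
  have hx0 : x ≠ 0 := hx
  rw [slope_def_field, hT0, hT x, hTm x, hTp x]
  rw [hIpdef, hImdef]
  field_simp
  ring
end

section
/- Let V ⊆ ℝ² be an open neighborhood of the origin, let X⁺, X⁻ : V → ℝ be continuous and nonvanishing on V with X⁺(0,0) X⁻(0,0) < 0, and set δ = sign(X⁺(0,0)). Let φ : ℝ → ℝ satisfy φ(0) = 0 and be differentiable at 0 with φ'(0) = −1, and let y⁺, y⁻ : ℝ × ℝ → ℝ be continuous on a neighborhood of (0, 0) with y⁺(0, 0) = y⁻(0, 0) = 0. For x near 0 define T^±(x) = (φ(x) − x) ∫₀¹ 1/X^±(x + (φ(x) − x)t, y^±(±δ(φ(x) − x)t, x)) dt and T(x) = δ(T⁻(x) − T⁺(x)). Then for every ε > 0 there exist x₁, x₂ ∈ (0, ε) with T(x₁) ≠ T(x₂); that is, T is not constant on any right-neighborhood of 0, so the center is not isochronous. -/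
open Filter Topology MeasureTheory intervalIntegral

lemma key_tendsto (V : Set (ℝ × ℝ)) (hV : IsOpen V) (h0V : ((0:ℝ),(0:ℝ)) ∈ V)
    (X : ℝ × ℝ → ℝ) (hX : ContinuousOn X V) (hX00 : X (0,0) ≠ 0)
    (W : Set (ℝ × ℝ)) (hW : W ∈ 𝓝 ((0:ℝ),(0:ℝ)))
    (y : ℝ × ℝ → ℝ) (hy : ContinuousOn y W) (hy0 : y (0,0) = 0)
    (ψ : ℝ → ℝ) (hψ : Tendsto ψ (𝓝 0) (𝓝 0)) (c : ℝ) :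
    Tendsto (fun x => ∫ t in (0:ℝ)..1, 1 / X (x + ψ x * t, y (c * ψ x * t, x)))
      (𝓝 0) (𝓝 (1 / X (0,0))) := by
  have hXc : ContinuousAt X (0,0) := hX.continuousAt (hV.mem_nhds h0V)
  have hyc : ContinuousAt y (0,0) := hy.continuousAt hW
  -- uniform lower bound for |X| on a ball
  have hm0 : 0 < |X (0,0)| / 2 := by positivity
  have hA : IsOpen (V ∩ X ⁻¹' (Metric.ball (X (0,0)) (|X (0,0)| / 2))) :=
    hX.isOpen_inter_preimage hV Metric.isOpen_ball
  have h0A : ((0:ℝ),(0:ℝ)) ∈ V ∩ X ⁻¹' (Metric.ball (X (0,0)) (|X (0,0)| / 2)) := by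
    refine ⟨h0V, ?_⟩
    simp only [Set.mem_preimage, Metric.mem_ball, dist_self]
    exact hm0
  obtain ⟨r1, hr1pos, hr1⟩ := Metric.isOpen_iff.mp hA _ h0A
  -- on ball r1, |X p| ≥ m
  have hXlb : ∀ p ∈ Metric.ball ((0:ℝ),(0:ℝ)) r1, |X (0,0)| / 2 ≤ |X p| := by
    intro p hp
    have h2 := (hr1 hp).2
    simp only [Set.mem_preimage, Metric.mem_ball, Real.dist_eq] at h2
    have tri : |X (0,0)| ≤ |X p| + |X p - X (0,0)| := by
      calc |X (0,0)| = |X p + -(X p - X (0,0))| := by congr 1; ring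
        _ ≤ |X p| + |-(X p - X (0,0))| := abs_add_le _ _
        _ = |X p| + |X p - X (0,0)| := by rw [abs_neg]
    linarith
  -- ball r3 ⊆ W with |y| < r1 there
  have hy' : ∀ᶠ p in 𝓝 ((0:ℝ),(0:ℝ)), |y p| < r1 ∧ p ∈ W := by
    have h1 : ∀ᶠ p in 𝓝 ((0:ℝ),(0:ℝ)), |y p| < r1 := by
      have := hyc.tendsto
      rw [hy0] at this
      have := this (Metric.ball_mem_nhds (0:ℝ) hr1pos)
      filter_upwards [this] with p hp
      simpa [Real.dist_eq] using hp
    filter_upwards [h1, hW] with p h1 h2 using ⟨h1, h2⟩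
  obtain ⟨r3, hr3pos, hr3⟩ := Metric.eventually_nhds_iff_ball.mp hy'
  -- choose s and η
  set s : ℝ := min (r1/2) (r3 / (|c|+1)) with hs
  have hs0 : 0 < s := by
    have : (0:ℝ) < |c| + 1 := by positivity
    apply lt_min (by positivity) (by positivity)
  have hψs : ∀ᶠ x in 𝓝 (0:ℝ), |ψ x| < s := by
    have := hψ (Metric.ball_mem_nhds (0:ℝ) hs0)
    filter_upwards [this] with x hx
    simpa [Real.dist_eq] using hx
  obtain ⟨η0, hη0pos, hη0⟩ := Metric.eventually_nhds_iff_ball.mp hψs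
  set η : ℝ := min η0 (min (r1/2) (r3/2)) with hη
  have hηpos : 0 < η := lt_min hη0pos (lt_min (by positivity) (by positivity))
  -- main geometric fact
  have hgood : ∀ x : ℝ, |x| < η → ∀ t : ℝ, t ∈ Set.Icc (0:ℝ) 1 →
      ((c * ψ x * t, x) ∈ Metric.ball ((0:ℝ),(0:ℝ)) r3 ∧
       (x + ψ x * t, y (c * ψ x * t, x)) ∈ Metric.ball ((0:ℝ),(0:ℝ)) r1) := by
    intro x hx t ht
    have hxη0 : |x| < η0 := lt_of_lt_of_le hx (min_le_left _ _)
    have hψx : |ψ x| < s := hη0 x (Metric.mem_ball.mpr (by simpa [Real.dist_eq] using hxη0))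
    have ht0 : 0 ≤ t := ht.1
    have ht1 : t ≤ 1 := ht.2
    have htabs : |t| ≤ 1 := abs_le.mpr ⟨by linarith, ht1⟩
    have hsr1 : s ≤ r1/2 := min_le_left _ _
    have hsr3 : |c| * s < r3 := by
      have h1 : s ≤ r3 / (|c|+1) := min_le_right _ _
      have h2 : |c| * s ≤ |c| * (r3 / (|c|+1)) :=
        mul_le_mul_of_nonneg_left h1 (abs_nonneg c)
      have h3 : |c| * (r3 / (|c|+1)) < r3 := by
        rw [mul_div_assoc']
        rw [div_lt_iff₀ (by positivity)]
        nlinarith [abs_nonneg c]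
      linarith
    have hxr1 : |x| < r1/2 := lt_of_lt_of_le hx ((min_le_right _ _).trans (min_le_left _ _))
    have hxr3 : |x| < r3 := by
      have : η ≤ r3/2 := (min_le_right _ _).trans (min_le_right _ _)
      linarith
    have hWmem : (c * ψ x * t, x) ∈ Metric.ball ((0:ℝ),(0:ℝ)) r3 := by
      rw [Metric.mem_ball, Prod.dist_eq]
      simp only [Real.dist_eq, sub_zero]
      rw [max_lt_iff]
      constructor
      · calc |c * ψ x * t| = |c| * |ψ x| * |t| := by rw [abs_mul, abs_mul]
          _ ≤ |c| * |ψ x| * 1 := by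
              apply mul_le_mul_of_nonneg_left htabs (by positivity)
          _ ≤ |c| * s := by
              rw [mul_one]
              exact mul_le_mul_of_nonneg_left hψx.le (abs_nonneg c)
          _ < r3 := hsr3
      · exact hxr3
    refine ⟨hWmem, ?_⟩
    rw [Metric.mem_ball, Prod.dist_eq]
    simp only [Real.dist_eq, sub_zero]
    rw [max_lt_iff]
    constructor
    · calc |x + ψ x * t| ≤ |x| + |ψ x * t| := abs_add_le _ _
        _ ≤ |x| + |ψ x| * 1 := by
            rw [abs_mul]
            have := mul_le_mul_of_nonneg_left htabs (abs_nonneg (ψ x))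
            linarith
        _ < r1/2 + r1/2 := by
            have : |ψ x| ≤ s := hψx.le
            nlinarith
        _ = r1 := by ring
    · exact (hr3 _ hWmem).1
  -- apply dominated convergence
  have key := intervalIntegral.tendsto_integral_filter_of_dominated_convergence
    (μ := volume) (a := (0:ℝ)) (b := 1)
    (F := fun x t => 1 / X (x + ψ x * t, y (c * ψ x * t, x)))
    (f := fun _ => 1 / X (0,0)) (l := 𝓝 (0:ℝ))
    (bound := fun _ => 1/(|X (0,0)| / 2))
    ?_ ?_ (intervalIntegrable_const) ?_
  · convert key using 2
    simp
  · -- measurability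
    filter_upwards [Metric.eventually_nhds_iff_ball.mpr ⟨η, hηpos, fun x hx => hx⟩] with x hx
    have hx' : |x| < η := by simpa [Real.dist_eq] using hx
    have hsub : Set.uIoc (0:ℝ) 1 ⊆ Set.Icc (0:ℝ) 1 := by
      rw [Set.uIoc_of_le (by norm_num : (0:ℝ) ≤ 1)]
      exact Set.Ioc_subset_Icc_self
    have hcont : ContinuousOn (fun t => 1 / X (x + ψ x * t, y (c * ψ x * t, x)))
        (Set.Icc (0:ℝ) 1) := by
      have hinner : ContinuousOn (fun t : ℝ => ((c * ψ x * t, x) : ℝ × ℝ)) (Set.Icc 0 1) :=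
        (Continuous.prodMk (continuous_const.mul continuous_id) continuous_const).continuousOn
      have hyco : ContinuousOn (fun t : ℝ => y (c * ψ x * t, x)) (Set.Icc 0 1) := by
        apply hy.comp hinner
        intro t ht
        exact (hr3 _ (hgood x hx' t ht).1).2
      have hP : ContinuousOn (fun t : ℝ => ((x + ψ x * t, y (c * ψ x * t, x)) : ℝ × ℝ))
          (Set.Icc 0 1) :=
        ((continuous_const.add (continuous_const.mul continuous_id)).continuousOn).prodMk hyco
      have hXP : ContinuousOn (fun t : ℝ => X (x + ψ x * t, y (c * ψ x * t, x)))
          (Set.Icc 0 1) := by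
        apply hX.comp hP
        intro t ht
        exact (hr1 (hgood x hx' t ht).2).1
      apply ContinuousOn.div continuousOn_const hXP
      intro t ht h0
      have hle := hXlb _ (hgood x hx' t ht).2
      rw [h0, abs_zero] at hle
      linarith
    exact (hcont.mono hsub).aestronglyMeasurable measurableSet_uIoc
  · -- bound
    filter_upwards [Metric.eventually_nhds_iff_ball.mpr ⟨η, hηpos, fun x hx => hx⟩] with x hx
    have hx' : |x| < η := by simpa [Real.dist_eq] using hx
    refine Filter.Eventually.of_forall (fun t ht => ?_)
    have ht' : t ∈ Set.Icc (0:ℝ) 1 := by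
      rw [Set.uIoc_of_le (by norm_num : (0:ℝ) ≤ 1)] at ht
      exact ⟨ht.1.le, ht.2⟩
    have hlb := hXlb _ (hgood x hx' t ht').2
    rw [Real.norm_eq_abs, abs_div, abs_one]
    rw [div_le_div_iff₀ (by linarith) hm0]
    nlinarith
  · -- pointwise limit
    refine Filter.Eventually.of_forall (fun t _ => ?_)
    have h1 : Tendsto (fun x : ℝ => ((c * ψ x * t, x) : ℝ × ℝ)) (𝓝 0) (𝓝 (0,0)) := by
      apply Tendsto.prodMk_nhds
      · have : Tendsto (fun x => c * ψ x * t) (𝓝 0) (𝓝 (c * 0 * t)) :=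
          ((hψ.const_mul c).mul_const t)
        simpa using this
      · exact tendsto_id
    have h2 : Tendsto (fun x : ℝ => y (c * ψ x * t, x)) (𝓝 0) (𝓝 0) := by
      have := hyc.tendsto.comp h1
      rwa [hy0] at this
    have h3 : Tendsto (fun x : ℝ => ((x + ψ x * t, y (c * ψ x * t, x)) : ℝ × ℝ))
        (𝓝 0) (𝓝 (0,0)) := by
      apply Tendsto.prodMk_nhds
      · have : Tendsto (fun x : ℝ => x + ψ x * t) (𝓝 0) (𝓝 (0 + 0 * t)) :=
          tendsto_id.add (hψ.mul_const t)
        simpa using this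
      · exact h2
    have h4 : Tendsto (fun x : ℝ => X (x + ψ x * t, y (c * ψ x * t, x))) (𝓝 0)
        (𝓝 (X (0,0))) := hXc.tendsto.comp h3
    simpa [one_div] using h4.inv₀ hX00



/-- Theorem A, analytic form: tangential centers are never isochronous.
Under the hypotheses of the Corollary of Theorem B, the period function
`T(x) = δ(T⁻(x) − T⁺(x))` is not constant on any right-neighborhood of `0`: for every
`ε > 0` there exist `x₁, x₂ ∈ (0, ε)` with `T(x₁) ≠ T(x₂)`. -/
theorem stmt7 (V : Set (ℝ × ℝ)) (hV : IsOpen V) (h0V : ((0:ℝ), (0:ℝ)) ∈ V)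
    (Xp Xm : ℝ × ℝ → ℝ) (hXp : ContinuousOn Xp V) (hXm : ContinuousOn Xm V)
    (hXp0 : ∀ p ∈ V, Xp p ≠ 0) (hXm0 : ∀ p ∈ V, Xm p ≠ 0)
    (hsign : Xp (0, 0) * Xm (0, 0) < 0)
    (δ : ℝ) (hδ : δ = Real.sign (Xp (0, 0)))
    (φ : ℝ → ℝ) (hφ0 : φ 0 = 0) (hφ' : HasDerivAt φ (-1) 0)
    (yp ym : ℝ × ℝ → ℝ)
    (W : Set (ℝ × ℝ)) (hW : W ∈ nhds ((0:ℝ), (0:ℝ)))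
    (hypc : ContinuousOn yp W) (hymc : ContinuousOn ym W)
    (hyp0 : yp (0, 0) = 0) (hym0 : ym (0, 0) = 0)
    (Tp Tm T : ℝ → ℝ)
    (hTp : ∀ x, Tp x = (φ x - x) * ∫ t in (0:ℝ)..1,
        1 / Xp (x + (φ x - x) * t, yp (δ * (φ x - x) * t, x)))
    (hTm : ∀ x, Tm x = (φ x - x) * ∫ t in (0:ℝ)..1,
        1 / Xm (x + (φ x - x) * t, ym (-δ * (φ x - x) * t, x)))
    (hT : ∀ x, T x = δ * (Tm x - Tp x)) :
    ∀ ε > 0, ∃ x₁ x₂ : ℝ, x₁ ∈ Set.Ioo 0 ε ∧ x₂ ∈ Set.Ioo 0 ε ∧ T x₁ ≠ T x₂ := by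
  have hXp00 : Xp (0,0) ≠ 0 := hXp0 _ h0V
  have hXm00 : Xm (0,0) ≠ 0 := hXm0 _ h0V
  have hδ0 : δ ≠ 0 := by
    rw [hδ]
    rcases Real.sign_apply_eq_of_ne_zero _ hXp00 with h | h <;> rw [h] <;> norm_num
  -- ψ
  set ψ : ℝ → ℝ := fun x => φ x - x with hψdef
  have hψ : Tendsto ψ (𝓝 0) (𝓝 0) := by
    have h1 : Tendsto φ (𝓝 0) (𝓝 0) := by
      have := hφ'.continuousAt.tendsto
      rwa [hφ0] at this
    have hid : Tendsto (fun x : ℝ => x) (𝓝 (0:ℝ)) (𝓝 (0:ℝ)) := Filter.tendsto_id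
    have := h1.sub hid
    simpa using this
  -- integrals
  set Ip : ℝ → ℝ := fun x => ∫ t in (0:ℝ)..1,
      1 / Xp (x + (φ x - x) * t, yp (δ * (φ x - x) * t, x)) with hIpdef
  set Im : ℝ → ℝ := fun x => ∫ t in (0:ℝ)..1,
      1 / Xm (x + (φ x - x) * t, ym (-δ * (φ x - x) * t, x)) with hImdef
  have hIp : Tendsto Ip (𝓝 0) (𝓝 (1 / Xp (0,0))) :=
    key_tendsto V hV h0V Xp hXp hXp00 W hW yp hypc hyp0 ψ hψ δ
  have hIm : Tendsto Im (𝓝 0) (𝓝 (1 / Xm (0,0))) :=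
    key_tendsto V hV h0V Xm hXm hXm00 W hW ym hymc hym0 ψ hψ (-δ)
  -- slope
  have hslope : Tendsto (fun x => ψ x / x) (𝓝[>] (0:ℝ)) (𝓝 (-2)) := by
    have h1 : Tendsto (slope φ 0) (𝓝[≠] (0:ℝ)) (𝓝 (-1)) :=
      hasDerivAt_iff_tendsto_slope.mp hφ'
    have h2 : Tendsto (slope φ 0) (𝓝[>] (0:ℝ)) (𝓝 (-1)) :=
      h1.mono_left (nhdsWithin_mono _ (fun x hx => ne_of_gt hx))
    have h3 : Tendsto (fun x => slope φ 0 x - 1) (𝓝[>] (0:ℝ)) (𝓝 (-1 - 1)) :=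
      h2.sub tendsto_const_nhds
    have h4 : (fun x => slope φ 0 x - 1) =ᶠ[𝓝[>] (0:ℝ)] (fun x => ψ x / x) := by
      filter_upwards [self_mem_nhdsWithin] with x hx
      have hx0 : x ≠ 0 := ne_of_gt hx
      simp only [slope_def_field, hφ0, hψdef]
      field_simp
      ring
    have := h3.congr' h4
    norm_num at this
    exact this
  -- the limit L
  set L : ℝ := δ * (-2) * (1 / Xm (0,0) - 1 / Xp (0,0)) with hLdef
  have hD : 1 / Xm (0,0) - 1 / Xp (0,0) ≠ 0 := by
    intro h
    have h1 : (Xm (0,0))⁻¹ = (Xp (0,0))⁻¹ := by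
      rw [← one_div, ← one_div]; linarith
    have h' : Xm (0,0) = Xp (0,0) := inv_injective h1
    rw [h'] at hsign
    nlinarith [mul_self_nonneg (Xp (0,0))]
  have hL0 : L ≠ 0 := mul_ne_zero (mul_ne_zero hδ0 (by norm_num)) hD
  -- T x / x tends to L
  have hTT : Tendsto (fun x => T x / x) (𝓝[>] (0:ℝ)) (𝓝 L) := by
    have base : Tendsto (fun x => δ * (ψ x / x) * (Im x - Ip x)) (𝓝[>] (0:ℝ)) (𝓝 L) := by
      rw [hLdef]
      exact (tendsto_const_nhds.mul hslope).mul
        ((hIm.sub hIp).mono_left nhdsWithin_le_nhds)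
    apply base.congr'
    filter_upwards [self_mem_nhdsWithin] with x hx
    have hx0 : x ≠ 0 := ne_of_gt hx
    rw [hT, hTm, hTp]
    simp only [hIpdef, hImdef, hψdef]
    field_simp
  -- final argument
  intro ε hε
  have hLpos : 0 < |L| := abs_pos.mpr hL0
  have hball : ∀ᶠ x in 𝓝[>] (0:ℝ), |T x / x - L| < |L|/4 := by
    have := Metric.tendsto_nhds.mp hTT (|L|/4) (by positivity)
    simpa [Real.dist_eq] using this
  rw [eventually_nhdsWithin_iff] at hball
  obtain ⟨η, hηpos, hη⟩ := Metric.eventually_nhds_iff_ball.mp hball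
  set x₁ : ℝ := min η ε / 2 with hx₁def
  have hx₁pos : 0 < x₁ := by positivity
  have hx₁η : x₁ < η := by
    have := min_le_left η ε; simp only [hx₁def]; linarith
  have hx₁ε : x₁ < ε := by
    have := min_le_right η ε; simp only [hx₁def]; linarith
  set x₂ : ℝ := x₁ / 2 with hx₂def
  have hx₂pos : 0 < x₂ := by positivity
  refine ⟨x₁, x₂, ⟨hx₁pos, hx₁ε⟩, ⟨hx₂pos, by linarith⟩, ?_⟩
  intro heq
  have hm1 : x₁ ∈ Metric.ball (0:ℝ) η := by
    simp [Real.dist_eq, abs_of_pos hx₁pos, hx₁η]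
  have hm2 : x₂ ∈ Metric.ball (0:ℝ) η := by
    simp only [Metric.mem_ball, Real.dist_eq, sub_zero, abs_of_pos hx₂pos]
    linarith
  have h1 := hη x₁ hm1 (Set.mem_Ioi.mpr hx₁pos)
  have h2 := hη x₂ hm2 (Set.mem_Ioi.mpr hx₂pos)
  have e2 : T x₂ / x₂ = 2 * (T x₁ / x₁) := by
    rw [← heq, hx₂def]
    field_simp
  rw [e2] at h2
  rw [abs_lt] at h1 h2
  rcases abs_choice L with h | h <;>
    · rw [h] at hLpos; linarith [h1.1, h1.2, h2.1, h2.2]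
end

section
/- Let V ⊆ ℝ² be an open neighborhood of the origin, let X⁺, Y⁺, X⁻, Y⁻ : V → ℝ be continuous, and let δ ∈ {−1, 1} be such that δ X⁺(p) > 0 and δ X⁻(p) < 0 for all p ∈ V. Fix x, x* ∈ ℝ. Suppose y⁺ : ℝ → ℝ is differentiable on the closed interval I⁺ between 0 and δ(x* − x) with y⁺(0) = 0, y⁺(δ(x* − x)) = 0, (x + δs, y⁺(s)) ∈ V and (y⁺)'(s) = δ Y⁺(x + δs, y⁺(s))/X⁺(x + δs, y⁺(s)) for all s ∈ I⁺; and suppose y⁻ : ℝ → ℝ is differentiable on the closed interval I⁻ between 0 and −δ(x* − x) with y⁻(0) = 0, y⁻(−δ(x* − x)) = 0, (x − δs, y⁻(s)) ∈ V and (y⁻)'(s) = −δ Y⁻(x − δs, y⁻(s))/X⁻(x − δs, y⁻(s)) for all s ∈ I⁻. Define T^± = (x* − x) ∫₀¹ 1/X^±(x + (x* − x)t, y^±(±δ(x* − x)t)) dt. Then there exist differentiable curves σ⁺, σ⁻, with σ^± defined on the closed interval between 0 and T^± and taking values in V, such that σ^±(0) = (x, 0), σ^±(T^±) = (x*, 0),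 and (σ^±)'(t) = (X^±(σ^±(t)), Y^±(σ^±(t))) for all t in the respective interval. -/
open Set Filter intervalIntegral

lemma key (V : Set (ℝ × ℝ)) (hV : IsOpen V)
    (X Y : ℝ × ℝ → ℝ) (hX : ContinuousOn X V)
    (ε : ℝ) (hε : ε = -1 ∨ ε = 1)
    (hXpos : ∀ p ∈ V, 0 < ε * X p)
    (x xs : ℝ) (y : ℝ → ℝ) (hy0 : y 0 = 0) (hyc : y (ε * (xs - x)) = 0)
    (hyV : ∀ s ∈ Set.uIcc 0 (ε * (xs - x)), (x + ε * s, y s) ∈ V)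
    (hyode : ∀ s ∈ Set.uIcc 0 (ε * (xs - x)),
      HasDerivAt y (ε * Y (x + ε * s, y s) / X (x + ε * s, y s)) s)
    (T : ℝ)
    (hT : T = (xs - x) * ∫ t in (0:ℝ)..1,
        1 / X (x + (xs - x) * t, y (ε * (xs - x) * t))) :
    ∃ σ : ℝ → ℝ × ℝ, σ 0 = (x, 0) ∧ σ T = (xs, 0) ∧
      ∀ t ∈ Set.uIcc 0 T, σ t ∈ V ∧ HasDerivAt σ (X (σ t), Y (σ t)) t := by
  have hε2 : ε * ε = 1 := by rcases hε with h | h <;> rw [h] <;> norm_num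
  have hεne : ε ≠ 0 := by rcases hε with h | h <;> rw [h] <;> norm_num
  set c : ℝ := ε * (xs - x) with hc
  -- projection onto the interval
  set a : ℝ := min 0 c with ha
  set b : ℝ := max 0 c with hb
  have hab : a ≤ b := min_le_max
  have hIab : Set.uIcc (0:ℝ) c = Set.Icc a b := rfl
  set p : ℝ → ℝ := fun u => min (max u a) b with hp
  have hpmem : ∀ u, p u ∈ Set.uIcc (0:ℝ) c := by
    intro u
    rw [hIab, Set.mem_Icc]
    constructor
    · exact le_min (le_max_right _ _) hab
    · exact min_le_right _ _
  have hpid : ∀ u ∈ Set.uIcc (0:ℝ) c, p u = u := by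
    intro u hu
    rw [hIab, Set.mem_Icc] at hu
    simp only [hp]
    rw [max_eq_left hu.1, min_eq_left hu.2]
  have hpcont : Continuous p := by
    exact (continuous_id.max continuous_const).min continuous_const
  -- the reparametrization density
  have hycont : ∀ u ∈ Set.uIcc (0:ℝ) c, ContinuousAt y u := fun u hu =>
    (hyode u hu).continuousAt
  set q : ℝ → ℝ × ℝ := fun u => (x + ε * p u, y (p u)) with hq
  have hqV : ∀ u, q u ∈ V := fun u => hyV (p u) (hpmem u)
  have hqcont : Continuous q := by
    refine continuous_prodMk.2 ⟨by fun_prop, ?_⟩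
    rw [continuous_iff_continuousAt]
    intro u
    exact (hycont (p u) (hpmem u)).comp hpcont.continuousAt
  set g : ℝ → ℝ := fun u => ε * X (q u) with hg
  have hgpos : ∀ u, 0 < g u := fun u => hXpos _ (hqV u)
  have hgcont : Continuous g := by
    rw [continuous_iff_continuousAt]
    intro u
    exact ((hX.continuousAt (hV.mem_nhds (hqV u))).comp hqcont.continuousAt).const_mul ε
  set h : ℝ → ℝ := fun u => (g u)⁻¹ with hh
  have hhpos : ∀ u, 0 < h u := fun u => inv_pos.2 (hgpos u)
  have hhcont : Continuous h := hgcont.inv₀ (fun u => (hgpos u).ne')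
  have hpp : ∀ u, p (p u) = p u := fun u => hpid _ (hpmem u)
  have hhproj : ∀ u, h u = h (p u) := by
    intro u
    simp only [hh, hg, hq, hpp]
  -- the time function τ
  set τ : ℝ → ℝ := fun r => ∫ u in (0:ℝ)..r, h u with hτ
  have hτderiv : ∀ r, HasDerivAt τ (h r) r := fun r =>
    (hhcont.integral_hasStrictDerivAt 0 r).hasDerivAt
  have hτcont : Continuous τ :=
    Differentiable.continuous (fun r => (hτderiv r).differentiableAt)
  have hτmono : StrictMono τ := by
    apply strictMono_of_deriv_pos
    intro r
    rw [(hτderiv r).deriv]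
    exact hhpos r
  -- lower bound on h
  obtain ⟨u₀, hu₀I, hu₀min⟩ := isCompact_uIcc.exists_isMinOn
    (Set.nonempty_uIcc (a := (0:ℝ)) (b := c)) hhcont.continuousOn
  set c₀ : ℝ := h u₀ with hc₀
  have hc₀pos : 0 < c₀ := hhpos u₀
  have hlb : ∀ u, c₀ ≤ h u := by
    intro u
    rw [hhproj u]
    exact isMinOn_iff.mp hu₀min (p u) (hpmem u)
  have hub : ∀ r : ℝ, 0 ≤ r → c₀ * r ≤ τ r := by
    intro r hr
    have h1 : ∫ u in (0:ℝ)..r, c₀ ≤ ∫ u in (0:ℝ)..r, h u :=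
      intervalIntegral.integral_mono_on hr intervalIntegrable_const
        (hhcont.intervalIntegrable _ _) (fun u _ => hlb u)
    simpa [mul_comm] using h1
  have hlbneg : ∀ r : ℝ, r ≤ 0 → τ r ≤ c₀ * r := by
    intro r hr
    have h1 : ∫ u in r..(0:ℝ), c₀ ≤ ∫ u in r..(0:ℝ), h u :=
      intervalIntegral.integral_mono_on hr intervalIntegrable_const
        (hhcont.intervalIntegrable _ _) (fun u _ => hlb u)
    have h2 : τ r = -∫ u in r..(0:ℝ), h u := intervalIntegral.integral_symm r 0
    rw [h2]
    simp only [intervalIntegral.integral_const, smul_eq_mul, sub_zero] at h1 ⊢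
    nlinarith
  have htop : Tendsto τ atTop atTop := by
    refine tendsto_atTop_mono' atTop ?_ (tendsto_id.const_mul_atTop hc₀pos)
    filter_upwards [eventually_ge_atTop (0:ℝ)] with r hr using hub r hr
  have hbot : Tendsto τ atBot atBot := by
    refine tendsto_atBot_mono' atBot ?_ (tendsto_id.const_mul_atBot hc₀pos)
    filter_upwards [eventually_le_atBot (0:ℝ)] with r hr using hlbneg r hr
  have hτsurj : Function.Surjective τ := hτcont.surjective htop hbot
  -- the inverse time change
  set e : ℝ ≃o ℝ := StrictMono.orderIsoOfSurjective τ hτmono hτsurj with he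
  set s : ℝ → ℝ := fun t => e.symm t with hs
  have hτs : ∀ t, τ (s t) = t := by
    intro t
    have := e.apply_symm_apply t
    rwa [he, StrictMono.coe_orderIsoOfSurjective] at this  -- may need adjusting
  have hsτ : ∀ u, s (τ u) = u := fun u =>
    StrictMono.orderIsoOfSurjective_symm_apply_self τ hτmono hτsurj u
  have hscont : Continuous s := e.symm.continuous
  have hsmono : Monotone s := e.symm.monotone
  have hτ0 : τ 0 = 0 := intervalIntegral.integral_same
  have hs0 : s 0 = 0 := by have := hsτ 0; rwa [hτ0] at this
  -- τ c = T
  have hτcT : τ c = T := by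
    have h1 : Set.EqOn (fun t => 1 / X (x + (xs - x) * t, y (ε * (xs - x) * t)))
        (fun t => ε * h (c * t)) (Set.uIcc (0:ℝ) 1) := by
      intro t ht
      rw [Set.uIcc_of_le (zero_le_one), Set.mem_Icc] at ht
      have hct : c * t ∈ Set.uIcc (0:ℝ) c := by
        rw [hIab, Set.mem_Icc, ha, hb]
        rcases le_total 0 c with h0 | h0
        · refine ⟨min_le_of_left_le (by nlinarith), le_max_of_le_right (by nlinarith)⟩
        · refine ⟨min_le_of_right_le (by nlinarith), le_max_of_le_left (by nlinarith)⟩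
      have hpct : p (c * t) = c * t := hpid _ hct
      have hpt1 : x + (xs - x) * t = x + ε * (c * t) := by
        rw [hc]; linear_combination (-((xs - x) * t)) * hε2
      have hpt2 : ε * (xs - x) * t = c * t := by rw [hc]
      have hXc : 0 < ε * X (x + ε * (c * t), y (c * t)) := hXpos _ (hyV _ hct)
      have hXne : X (x + ε * (c * t), y (c * t)) ≠ 0 := by
        intro h0; rw [h0, mul_zero] at hXc; exact lt_irrefl 0 hXc
      simp only [hh, hg, hq, hpct, hpt1, hpt2]
      rcases hε with hE | hE <;> rw [hE] <;> rw [hE] at hXne <;>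
        simp [one_div] <;> simp [neg_inv]
    have h2 : T = c * ∫ t in (0:ℝ)..1, h (c * t) := by
      rw [hT, intervalIntegral.integral_congr h1, intervalIntegral.integral_const_mul]
      rw [hc]; ring
    have h3 : c • ∫ t in (0:ℝ)..1, h (c * t) = ∫ u in (c * 0)..(c * 1), h u :=
      intervalIntegral.smul_integral_comp_mul_left h c
    rw [h2, ← smul_eq_mul, h3]
    show (∫ u in (0:ℝ)..c, h u) = _
    norm_num
  have hsT : s T = c := by rw [← hτcT, hsτ]
  -- s maps uIcc 0 T into uIcc 0 c
  have hsmem : ∀ t ∈ Set.uIcc 0 T, s t ∈ Set.uIcc (0:ℝ) c := by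
    intro t ht
    rw [Set.mem_uIcc] at ht
    rw [← hs0, ← hsT, Set.mem_uIcc]
    rcases ht with ⟨h1, h2⟩ | ⟨h1, h2⟩
    · exact Or.inl ⟨hsmono h1, hsmono h2⟩
    · exact Or.inr ⟨hsmono h1, hsmono h2⟩
  -- derivative of s
  have hsderiv : ∀ t, HasDerivAt s (g (s t)) t := by
    intro t
    have h1 : HasDerivAt s (h (s t))⁻¹ t := by
      refine HasDerivAt.of_local_left_inverse hscont.continuousAt
        (hτderiv (s t)) (hhpos (s t)).ne' ?_
      exact Filter.Eventually.of_forall hτs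
    simpa only [hh, inv_inv] using h1
  -- the solution curve
  refine ⟨fun t => (x + ε * s t, y (s t)), ?_, ?_, ?_⟩
  · show (x + ε * s 0, y (s 0)) = (x, 0)
    rw [hs0, hy0]; norm_num
  · show (x + ε * s T, y (s T)) = (xs, 0)
    rw [hsT, hyc]
    have : x + ε * c = xs := by rw [hc]; linear_combination (xs - x) * hε2
    rw [this]
  · intro t ht
    have hst := hsmem t ht
    have hmemV := hyV (s t) hst
    refine ⟨hmemV, ?_⟩
    have hy' := hyode (s t) hst
    have hs' := hsderiv t
    have h1 : HasDerivAt (fun t => x + ε * s t) (ε * g (s t)) t :=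
      (hs'.const_mul ε).const_add x
    have h2 : HasDerivAt (fun t => y (s t))
        ((ε * Y (x + ε * s t, y (s t)) / X (x + ε * s t, y (s t))) * g (s t)) t :=
      hy'.comp t hs'
    have hXσ : 0 < ε * X (x + ε * s t, y (s t)) := hXpos _ hmemV
    have hXne : X (x + ε * s t, y (s t)) ≠ 0 := by
      intro h0; rw [h0, mul_zero] at hXσ; exact lt_irrefl 0 hXσ
    have hgσ : g (s t) = ε * X (x + ε * s t, y (s t)) := by
      simp only [hg, hq, hpid (s t) hst]
    have e1 : ε * g (s t) = X (x + ε * s t, y (s t)) := by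
      rw [hgσ]; linear_combination X (x + ε * s t, y (s t)) * hε2
    have e2 : (ε * Y (x + ε * s t, y (s t)) / X (x + ε * s t, y (s t))) * g (s t)
        = Y (x + ε * s t, y (s t)) := by
      rw [hgσ]
      have h9 : ε * Y (x + ε * s t, y (s t)) / X (x + ε * s t, y (s t)) *
          (ε * X (x + ε * s t, y (s t))) = (ε * ε) * Y (x + ε * s t, y (s t)) *
          (X (x + ε * s t, y (s t)) / X (x + ε * s t, y (s t))) := by ring
      rw [h9, hε2, div_self hXne]; ring
    rw [e1] at h1
    rw [e2] at h2
    exact h1.prodMk h2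




/-- Theorem B.
For a Filippov vector field with pieces `Z⁺ = (X⁺, Y⁺)` (where `δX⁺ > 0`) and
`Z⁻ = (X⁻, Y⁻)` (where `δX⁻ < 0`) on `V`, if `y⁺` and `y⁻` are the second coordinates of
the trajectories of the time-reparametrized fields `Z^±/|X^±|` through `(x, 0)` which
return to `(x*, 0)` at the times `±δ(x* − x)`, then, setting
`T^± = (x* − x) ∫₀¹ 1/X^±(x + (x* − x)t, y^±(±δ(x* − x)t)) dt`, there exist differentiable
curves `σ^±` defined on the closed interval between `0` and `T^±`, with values in `V`,
with `σ^±(0) = (x, 0)`, `σ^±(T^±) = (x*, 0)`, and `(σ^±)'(t) = Z^±(σ^±(t))`. -/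
theorem stmt11 (V : Set (ℝ × ℝ)) (hV : IsOpen V)
    (Xp Yp Xm Ym : ℝ × ℝ → ℝ)
    (hXp : ContinuousOn Xp V) (hYp : ContinuousOn Yp V)
    (hXm : ContinuousOn Xm V) (hYm : ContinuousOn Ym V)
    (δ : ℝ) (hδ : δ = -1 ∨ δ = 1)
    (hXppos : ∀ p ∈ V, 0 < δ * Xp p) (hXmneg : ∀ p ∈ V, δ * Xm p < 0)
    (x xs : ℝ)
    (yp : ℝ → ℝ) (hyp0 : yp 0 = 0) (hypτ : yp (δ * (xs - x)) = 0)
    (hypV : ∀ s ∈ Set.uIcc 0 (δ * (xs - x)), (x + δ * s, yp s) ∈ V)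
    (hypode : ∀ s ∈ Set.uIcc 0 (δ * (xs - x)),
      HasDerivAt yp (δ * Yp (x + δ * s, yp s) / Xp (x + δ * s, yp s)) s)
    (ym : ℝ → ℝ) (hym0 : ym 0 = 0) (hymτ : ym (-δ * (xs - x)) = 0)
    (hymV : ∀ s ∈ Set.uIcc 0 (-δ * (xs - x)), (x - δ * s, ym s) ∈ V)
    (hymode : ∀ s ∈ Set.uIcc 0 (-δ * (xs - x)),
      HasDerivAt ym (-δ * Ym (x - δ * s, ym s) / Xm (x - δ * s, ym s)) s)
    (Tp Tm : ℝ)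
    (hTp : Tp = (xs - x) * ∫ t in (0:ℝ)..1,
        1 / Xp (x + (xs - x) * t, yp (δ * (xs - x) * t)))
    (hTm : Tm = (xs - x) * ∫ t in (0:ℝ)..1,
        1 / Xm (x + (xs - x) * t, ym (-δ * (xs - x) * t))) :
    (∃ σp : ℝ → ℝ × ℝ, σp 0 = (x, 0) ∧ σp Tp = (xs, 0) ∧
        ∀ t ∈ Set.uIcc 0 Tp, σp t ∈ V ∧
          HasDerivAt σp (Xp (σp t), Yp (σp t)) t) ∧
      (∃ σm : ℝ → ℝ × ℝ, σm 0 = (x, 0) ∧ σm Tm = (xs, 0) ∧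
        ∀ t ∈ Set.uIcc 0 Tm, σm t ∈ V ∧
          HasDerivAt σm (Xm (σm t), Ym (σm t)) t) := by

  have hpt : ∀ s : ℝ, x + -δ * s = x - δ * s := fun s => by ring
  constructor
  · exact key V hV Xp Yp hXp δ hδ hXppos x xs yp hyp0 hypτ hypV hypode Tp hTp
  · refine key V hV Xm Ym hXm (-δ) ?_ ?_ x xs ym hym0 hymτ ?_ ?_ Tm hTm
    · rcases hδ with h | h <;> rw [h] <;> norm_num
    · intro p hp
      have := hXmneg p hp
      nlinarith
    · intro s hs
      rw [hpt s]
      exact hymV s hs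
    · intro s hs
      have := hymode s hs
      rwa [← hpt s] at this
end
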